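/- arXiv:1302.4498 — 13 statements merged into one kernel-verified Lean document; each statement's English description precedes it below -/
import Mathlib

section
/- Let p ≥ 5 be a prime and F = F_{p^r}. If A : F → F is an Alltop function, Π : F → F is a planar Dembowski–Ostrom polynomial, L : F → F is an additive function and c ∈ F, then the function A'(x) = A(x) + Π(x) + L(x) + c is also an Alltop function on F. -/
open Finset

/-- The difference function `Δ_{f,a}(x) = f(x+a) - f(x)`. -/
def deltaFn {F : Type*} [Field F] (f : F → F) (a : F) : F → F := fun x => f (x + a) - f x

/-- `f` is planar if `Δ_{f,a}` is a bijection for every `a ≠ 0`. -/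
def IsPlanar {F : Type*} [Field F] (f : F → F) : Prop :=
  ∀ a : F, a ≠ 0 → Function.Bijective (deltaFn f a)

/-- `f` is an Alltop function if `Δ_{f,a}` is planar for every `a ≠ 0`. -/
def IsAlltop {F : Type*} [Field F] (f : F → F) : Prop :=
  ∀ a : F, a ≠ 0 → IsPlanar (deltaFn f a)

/-- `L` is additive if `L(x+y) = L(x) + L(y)`. -/
def IsAdditive {F : Type*} [Field F] (L : F → F) : Prop :=
  ∀ x y : F, L (x + y) = L x + L y

/-- A Dembowski–Ostrom polynomial function on `F_{p^r}`:
`f(x) = ∑_{i,j=0}^{r-1} a_{ij} x^{p^i + p^j}`. -/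
def IsDembowskiOstrom (p r : ℕ) [Fact p.Prime] (f : GaloisField p r → GaloisField p r) : Prop :=
  ∃ a : ℕ → ℕ → GaloisField p r,
    ∀ x, f x = ∑ i ∈ Finset.range r, ∑ j ∈ Finset.range r, a i j * x ^ (p ^ i + p ^ j)

theorem alltop_add_planarDO_add_additive_add_const (p r : ℕ) [Fact p.Prime] (hp : 5 ≤ p)
    (hr : 0 < r) (A P L : GaloisField p r → GaloisField p r) (c : GaloisField p r)
    (hA : IsAlltop A) (hP : IsPlanar P) (hPDO : IsDembowskiOstrom p r P) (hL : IsAdditive L) :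
    IsAlltop (fun x => A x + P x + L x + c) := by
  intro a ha b hb
  obtain ⟨co, hco⟩ := hPDO
  have mono : ∀ (i j : ℕ) (x : GaloisField p r),
      (x + b + a) ^ (p ^ i + p ^ j) - (x + b) ^ (p ^ i + p ^ j)
        - ((x + a) ^ (p ^ i + p ^ j) - x ^ (p ^ i + p ^ j))
        = a ^ (p ^ i) * b ^ (p ^ j) + b ^ (p ^ i) * a ^ (p ^ j) := by
    intro i j x
    simp only [pow_add, add_pow_char_pow]
    ring
  set d : GaloisField p r := ∑ i ∈ Finset.range r, ∑ j ∈ Finset.range r,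
    co i j * (a ^ (p ^ i) * b ^ (p ^ j) + b ^ (p ^ i) * a ^ (p ^ j)) with hd
  have heq : deltaFn (deltaFn (fun x => A x + P x + L x + c) a) b
      = fun x => deltaFn (deltaFn A a) b x + d := by
    funext x
    have hsum : (∑ i ∈ Finset.range r, ∑ j ∈ Finset.range r,
        co i j * (x + b + a) ^ (p ^ i + p ^ j))
        - (∑ i ∈ Finset.range r, ∑ j ∈ Finset.range r,
        co i j * (x + b) ^ (p ^ i + p ^ j))
        - ((∑ i ∈ Finset.range r, ∑ j ∈ Finset.range r,
        co i j * (x + a) ^ (p ^ i + p ^ j))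
        - (∑ i ∈ Finset.range r, ∑ j ∈ Finset.range r,
        co i j * x ^ (p ^ i + p ^ j))) = d := by
      rw [hd]
      simp only [← Finset.sum_sub_distrib]
      refine Finset.sum_congr rfl fun i _ => Finset.sum_congr rfl fun j _ => ?_
      linear_combination (co i j) * mono i j x
    simp only [deltaFn, hco]
    linear_combination hsum + hL (x + b) a + hL x b - hL x a - hL x b
  rw [heq]
  exact (Equiv.addRight d).bijective.comp (hA a ha b hb)
end

section
/- Let p ≥ 5 be a prime, F = F_{p^r}, A : F → F any function and L : F → F an additive polynomial function. Then the composition A ∘ L is an Alltop function on F if and only if A is an Alltop function and L is a bijection of F. -/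
open Finset

/-- `l` is affine if `l = L + c` for an additive `L` and a constant `c`. -/
def IsAffine {F : Type*} [Field F] (l : F → F) : Prop :=
  ∃ L : F → F, ∃ c : F, IsAdditive L ∧ ∀ x, l x = L x + c

/-- Extended affine (EA) equivalence: `f(x) = l1(g(l2(x))) + l3(x)` with
`l1, l2, l3` affine and `l1, l2` bijections. -/
def EAEquiv {F : Type*} [Field F] (f g : F → F) : Prop :=
  ∃ l1 l2 l3 : F → F, IsAffine l1 ∧ IsAffine l2 ∧ IsAffine l3 ∧
    Function.Bijective l1 ∧ Function.Bijective l2 ∧ ∀ x, f x = l1 (g (l2 x)) + l3 x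

theorem alltop_comp_additive_iff (p r : ℕ) [Fact p.Prime] (hp : 5 ≤ p) (hr : 0 < r)
    (A L : GaloisField p r → GaloisField p r) (hL : IsAdditive L) :
    IsAlltop (A ∘ L) ↔ IsAlltop A ∧ Function.Bijective L := by
  have hL0 : L 0 = 0 := by
    have h := hL 0 0
    rw [add_zero] at h
    exact right_eq_add.mp h
  have hdelta : ∀ (f : GaloisField p r → GaloisField p r) (a : GaloisField p r),
      deltaFn (f ∘ L) a = deltaFn f (L a) ∘ L := by
    intro f a; funext x; simp only [deltaFn, Function.comp_apply, hL x a]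
  constructor
  · intro h
    have hker : ∀ a : GaloisField p r, a ≠ 0 → L a ≠ 0 := by
      intro a ha hLa
      have hplanar := h a ha
      have hzero : deltaFn (A ∘ L) a = fun _ => (0 : GaloisField p r) := by
        funext x
        simp only [deltaFn, Function.comp_apply, hL x a, hLa, add_zero, sub_self]
      have hb := hplanar 1 one_ne_zero
      rw [hzero] at hb
      obtain ⟨x, hx⟩ := hb.2 1
      simp [deltaFn] at hx
    have hLinj : Function.Injective L := by
      intro x y hxy
      by_contra hne
      apply hker (x - y) (sub_ne_zero.mpr hne)
      have h2 := hL (x - y) y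
      rw [sub_add_cancel] at h2
      rw [hxy] at h2
      exact right_eq_add.mp h2
    have hLbij : Function.Bijective L := Finite.injective_iff_bijective.mp hLinj
    refine ⟨?_, hLbij⟩
    intro a ha b hb
    obtain ⟨a', ha'⟩ := hLbij.2 a
    obtain ⟨b', hb'⟩ := hLbij.2 b
    have ha'0 : a' ≠ 0 := by rintro rfl; rw [hL0] at ha'; exact ha ha'.symm
    have hb'0 : b' ≠ 0 := by rintro rfl; rw [hL0] at hb'; exact hb hb'.symm
    have hd := h a' ha'0 b' hb'0
    have heq : deltaFn (deltaFn (A ∘ L) a') b' = deltaFn (deltaFn A a) b ∘ L := by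
      rw [hdelta A a', ha', hdelta (deltaFn A a) b', hb']
    rw [heq] at hd
    exact (Function.Bijective.of_comp_iff _ hLbij).mp hd
  · rintro ⟨hA, hLbij⟩ a ha b hb
    have hLa : L a ≠ 0 := by
      intro hz; exact ha (hLbij.1 (hz.trans hL0.symm))
    have hLb : L b ≠ 0 := by
      intro hz; exact hb (hLbij.1 (hz.trans hL0.symm))
    have heq : deltaFn (deltaFn (A ∘ L) a) b = deltaFn (deltaFn A (L a)) (L b) ∘ L := by
      rw [hdelta A a, hdelta (deltaFn A (L a)) b]
    rw [heq]
    exact (hA (L a) hLa (L b) hLb).comp hLbij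
end

section
/- Let p ≥ 5 be a prime, F = F_{p^r}, A : F → F any function and L : F → F an additive polynomial function. Then the composition L ∘ A is an Alltop function on F if and only if A is an Alltop function and L is a bijection of F. -/
open Finset

theorem additive_comp_alltop_iff (p r : ℕ) [Fact p.Prime] (hp : 5 ≤ p) (hr : 0 < r)
    (A L : GaloisField p r → GaloisField p r) (hL : IsAdditive L) :
    IsAlltop (L ∘ A) ↔ IsAlltop A ∧ Function.Bijective L := by
  have hfin : Finite (GaloisField p r) := inferInstance
  have hL0 : L 0 = 0 := by
    have := hL 0 0; simpa using this
  have hLsub : ∀ u v, L (u - v) = L u - L v := by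
    intro u v
    have h := hL (u - v) v
    rw [sub_add_cancel] at h
    exact eq_sub_of_add_eq h.symm
  have hcomp : ∀ (f : GaloisField p r → GaloisField p r) (a : GaloisField p r),
      deltaFn (L ∘ f) a = L ∘ deltaFn f a := by
    intro f a; funext x; simp [deltaFn, hLsub]
  have key : ∀ a b, deltaFn (deltaFn (L ∘ A) a) b = L ∘ deltaFn (deltaFn A a) b := by
    intro a b; rw [hcomp, hcomp]
  constructor
  · intro h
    have h1 : Function.Bijective (L ∘ deltaFn (deltaFn A 1) 1) := by
      rw [← key]; exact h 1 one_ne_zero 1 one_ne_zero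
    have hLbij : Function.Bijective L := by
      have hsurj : Function.Surjective L := h1.surjective.of_comp
      exact Finite.injective_iff_bijective.mp
        (Finite.surjective_iff_bijective.mp hsurj).injective
    refine ⟨?_, hLbij⟩
    intro a ha b hb
    have h2 : Function.Bijective (L ∘ deltaFn (deltaFn A a) b) := by
      rw [← key]; exact h a ha b hb
    have hinj : Function.Injective (deltaFn (deltaFn A a) b) :=
      Function.Injective.of_comp h2.injective
    exact Finite.injective_iff_bijective.mp hinj
  · rintro ⟨hA, hLbij⟩ a ha b hb
    rw [key]
    exact hLbij.comp (hA a ha b hb)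
end

section
/- Let p ≥ 5 be a prime and F = F_{p^r}. Let l1, l2, l3 : F → F be affine functions with l1 and l2 bijections, and let d : F → F be a Dembowski–Ostrom polynomial function. If A : F → F is an Alltop function, then A'(x) = l1(A(l2(x))) + d(x) + l3(x) is also an Alltop function on F. -/
open Finset

private lemma do_mono {R : Type*} [CommRing R] (p : ℕ) [Fact p.Prime] [CharP R p]
    (x a b : R) (i j : ℕ) :
    (x + b + a) ^ (p ^ i + p ^ j) - (x + b) ^ (p ^ i + p ^ j) -
      ((x + a) ^ (p ^ i + p ^ j) - x ^ (p ^ i + p ^ j)) =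
    a ^ p ^ i * b ^ p ^ j + b ^ p ^ i * a ^ p ^ j := by
  simp only [pow_add, add_pow_char_pow]; ring

theorem alltop_of_affine_comp_add_DO (p r : ℕ) [Fact p.Prime] (hp : 5 ≤ p) (hr : 0 < r)
    (l1 l2 l3 d A : GaloisField p r → GaloisField p r)
    (hl1 : IsAffine l1) (hl2 : IsAffine l2) (hl3 : IsAffine l3)
    (hl1b : Function.Bijective l1) (hl2b : Function.Bijective l2)
    (hd : IsDembowskiOstrom p r d) (hA : IsAlltop A) :
    IsAlltop (fun x => l1 (A (l2 x)) + d x + l3 x) := by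
  obtain ⟨L1, c1, hL1, hl1e⟩ := hl1
  obtain ⟨L2, c2, hL2, hl2e⟩ := hl2
  obtain ⟨L3, c3, hL3, hl3e⟩ := hl3
  obtain ⟨co, hdo⟩ := hd
  -- basic facts about additive maps
  have hL1_0 : L1 0 = 0 := by have := hL1 0 0; simpa using this
  have hL1sub : ∀ u v, L1 u - L1 v = L1 (u - v) := by
    intro u v
    have := hL1 (u - v) v
    simp only [sub_add_cancel] at this
    linear_combination this
  have hL1b : Function.Bijective L1 := by
    have : L1 = (fun y => y - c1) ∘ l1 := by
      funext x; simp [hl1e x]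
    rw [this]
    exact (Equiv.subRight c1).bijective.comp hl1b
  have hL2b : Function.Bijective L2 := by
    have : L2 = (fun y => y - c2) ∘ l2 := by
      funext x; simp [hl2e x]
    rw [this]
    exact (Equiv.subRight c2).bijective.comp hl2b
  have hL2_0 : L2 0 = 0 := by have := hL2 0 0; simpa using this
  have hl2shift : ∀ x t, l2 (x + t) = l2 x + L2 t := by
    intro x t; rw [hl2e, hl2e, hL2]; ring
  intro a ha b hb
  set a' := L2 a with ha'def
  set b' := L2 b with hb'def
  have ha' : a' ≠ 0 := fun h => ha (hL2b.1 (by rw [hL2_0]; exact h))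
  have hb' : b' ≠ 0 := fun h => hb (hL2b.1 (by rw [hL2_0]; exact h))
  set h := deltaFn (deltaFn A a') b' with hdef
  have hh : Function.Bijective h := hA a' ha' b' hb'
  set C : GaloisField p r := ∑ i ∈ Finset.range r, ∑ j ∈ Finset.range r,
      co i j * (a ^ p ^ i * b ^ p ^ j + b ^ p ^ i * a ^ p ^ j) with hCdef
  have hdconst : ∀ x, d (x + b + a) - d (x + b) - (d (x + a) - d x) = C := by
    intro x
    simp only [hdo, hCdef]
    simp only [← Finset.sum_sub_distrib]
    refine Finset.sum_congr rfl fun i _ => Finset.sum_congr rfl fun j _ => ?_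
    rw [← mul_sub, ← mul_sub, ← mul_sub, do_mono p x a b i j]
  have hkey : deltaFn (deltaFn (fun x => l1 (A (l2 x)) + d x + l3 x) a) b =
      (fun y => y + C) ∘ (L1 ∘ (h ∘ l2)) := by
    funext x
    simp only [deltaFn, Function.comp, hdef]
    have e1 : l2 (x + b + a) = l2 x + b' + a' := by rw [hl2shift, hl2shift]
    have e2 : l2 (x + b) = l2 x + b' := hl2shift x b
    have e3 : l2 (x + a) = l2 x + a' := hl2shift x a
    rw [e1, e2, e3]
    simp only [hl1e, hl3e, hL3]
    have hd' := hdconst x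
    have hs1 := hL1sub (A (l2 x + b' + a')) (A (l2 x + b'))
    have hs2 := hL1sub (A (l2 x + a')) (A (l2 x))
    have hs3 := hL1sub (A (l2 x + b' + a') - A (l2 x + b')) (A (l2 x + a') - A (l2 x))
    have e4 : L3 (x + b + a) = L3 x + L3 b + L3 a := by rw [hL3, hL3]
    have e5 : L3 (x + b) = L3 x + L3 b := hL3 x b
    have e6 : L3 (x + a) = L3 x + L3 a := hL3 x a
    linear_combination hd' + hs1 - hs2 + hs3 + e4 - e5 - e6
  rw [hkey]
  exact (Equiv.addRight C).bijective.comp (hL1b.comp (hh.comp hl2b))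
end

section
/- Let p ≥ 5 be a prime and F = F_{p^r}. Let l1, l2, l3 : F → F be affine functions with l1 and l2 bijections, write l2(x) = L2(x) + c2 with L2 additive, and let d : F → F be a Dembowski–Ostrom polynomial function. Let A : F → F be an Alltop function and A'(x) = l1(A(l2(x))) + d(x) + l3(x). Then for every b ∈ F with b ≠ 0, the difference function Δ_{A',b} is EA-equivalent to Δ_{A,L2(b)} (and L2(b) ≠ 0). -/
open Finset

lemma isAdditive_zero' {F : Type*} [Field F] {L : F → F} (h : IsAdditive L) : L 0 = 0 := by
  have h0 := h 0 0
  rw [add_zero] at h0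
  exact right_eq_add.mp h0

lemma isAdditive_sub' {F : Type*} [Field F] {L : F → F} (h : IsAdditive L) (u v : F) :
    L (u - v) = L u - L v := by
  have := h (u - v) v
  rw [sub_add_cancel] at this
  linear_combination -this

theorem delta_of_EA_image_EAequiv_delta (p r : ℕ) [Fact p.Prime] (hp : 5 ≤ p) (hr : 0 < r)
    (l1 l2 l3 d A : GaloisField p r → GaloisField p r)
    (L2 : GaloisField p r → GaloisField p r) (c2 : GaloisField p r)
    (hl1 : IsAffine l1) (hl2 : IsAffine l2) (hl3 : IsAffine l3)
    (hl1b : Function.Bijective l1) (hl2b : Function.Bijective l2)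
    (hL2 : IsAdditive L2) (hl2eq : ∀ x, l2 x = L2 x + c2)
    (hd : IsDembowskiOstrom p r d) (hA : IsAlltop A)
    (A' : GaloisField p r → GaloisField p r)
    (hA' : ∀ x, A' x = l1 (A (l2 x)) + d x + l3 x) :
    ∀ b : GaloisField p r, b ≠ 0 →
      L2 b ≠ 0 ∧ EAEquiv (deltaFn A' b) (deltaFn A (L2 b)) := by
  intro b hb
  obtain ⟨L1, c1, hL1, hl1eq⟩ := hl1
  obtain ⟨L3, c3, hL3, hl3eq⟩ := hl3
  obtain ⟨a, hda⟩ := hd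
  have hL2b : L2 b ≠ 0 := by
    intro h
    apply hb
    apply hl2b.injective
    rw [hl2eq, hl2eq, h, isAdditive_zero' hL2]
  refine ⟨hL2b, ?_⟩
  set D : GaloisField p r → GaloisField p r := fun x =>
    (∑ i ∈ Finset.range r, ∑ j ∈ Finset.range r,
      a i j * (b ^ p ^ i * x ^ p ^ j + b ^ p ^ j * x ^ p ^ i)) with hD
  have hfrob : ∀ (x y : GaloisField p r) (k : ℕ),
      (x + y) ^ p ^ k = x ^ p ^ k + y ^ p ^ k := fun x y k => add_pow_char_pow x y p k
  have hDadd : IsAdditive D := by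
    intro x y
    simp only [hD]
    rw [← Finset.sum_add_distrib]
    refine Finset.sum_congr rfl fun i _ => ?_
    rw [← Finset.sum_add_distrib]
    refine Finset.sum_congr rfl fun j _ => ?_
    rw [hfrob, hfrob]
    ring
  have hd0 : d 0 = 0 := by
    rw [hda]
    refine Finset.sum_eq_zero fun i _ => Finset.sum_eq_zero fun j _ => ?_
    rw [zero_pow (Nat.add_pos_left (pow_pos (Fact.out (p := p.Prime)).pos i) _).ne', mul_zero]
  have h1 : ∀ x, d (x + b) = d x + D x + d b := by
    intro x
    rw [hda (x + b), hda x, hda b, hD]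
    rw [← Finset.sum_add_distrib, ← Finset.sum_add_distrib]
    refine Finset.sum_congr rfl fun i _ => ?_
    rw [← Finset.sum_add_distrib, ← Finset.sum_add_distrib]
    refine Finset.sum_congr rfl fun j _ => ?_
    simp only [pow_add]
    rw [hfrob, hfrob]
    ring
  have hL1b : Function.Bijective L1 := by
    have : L1 = (fun y => y - c1) ∘ l1 := by
      funext x; simp [hl1eq x]
    rw [this]
    exact (Function.bijective_iff_has_inverse.mpr
      ⟨fun y => y + c1, fun x => by simp, fun x => by simp⟩).comp hl1b
  refine ⟨L1, l2, fun x => D x + (d b + L3 b), ?_, hl2, ?_, hL1b, hl2b, ?_⟩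
  · exact ⟨L1, 0, hL1, fun x => by rw [add_zero]⟩
  · exact ⟨D, d b + L3 b, hDadd, fun x => rfl⟩
  · intro x
    have hl2shift : l2 (x + b) = l2 x + L2 b := by
      rw [hl2eq, hl2eq, hL2]; ring
    have hl3shift : l3 (x + b) - l3 x = L3 b := by
      rw [hl3eq, hl3eq, hL3]; ring
    have hll : l1 (A (l2 (x + b))) - l1 (A (l2 x)) =
        L1 (A (l2 (x + b))) - L1 (A (l2 x)) := by
      rw [hl1eq, hl1eq]; ring
    simp only [deltaFn, hA']
    rw [← hl2shift, isAdditive_sub' hL1]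
    linear_combination hll + h1 x + hl3shift
end

section
/- Let p > 3 be a prime, F = F_{p^r}, and let L1, L2, L3 : F → F be additive polynomial functions. If the product A(x) = L1(x)·L2(x)·L3(x) is an Alltop function on F, then L1, L2 and L3 are all bijections of F. -/
open Finset

private lemma alltop_key {F : Type*} [Field F] {L1 L2 L3 : F → F}
    (h1 : IsAdditive L1) (h2 : IsAdditive L2) (h3 : IsAdditive L3)
    (hA : IsAlltop (fun x => L1 x * L2 x * L3 x)) {a : F}
    (ha : L1 a = 0) (hne : a ≠ 0) : False := by
  have hbij := (hA a hne) a hne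
  have h10 : L1 0 = 0 := by have := h1 0 0; simpa using this.symm
  have h20 : L2 0 = 0 := by have := h2 0 0; simpa using this.symm
  have h30 : L3 0 = 0 := by have := h3 0 0; simpa using this.symm
  have heq : deltaFn (deltaFn (fun x => L1 x * L2 x * L3 x) a) a 0
      = deltaFn (deltaFn (fun x => L1 x * L2 x * L3 x) a) a a := by
    have e1 : ∀ x y : F, L1 (x + y) = L1 x + L1 y := h1
    have e2 : ∀ x y : F, L2 (x + y) = L2 x + L2 y := h2
    have e3 : ∀ x y : F, L3 (x + y) = L3 x + L3 y := h3
    simp only [deltaFn, e1, e2, e3, h10, h20, h30, ha]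
    ring
  exact hne ((hbij.injective heq).symm)

private lemma alltop_inj {F : Type*} [Field F] {L1 L2 L3 : F → F}
    (h1 : IsAdditive L1) (h2 : IsAdditive L2) (h3 : IsAdditive L3)
    (hA : IsAlltop (fun x => L1 x * L2 x * L3 x)) : Function.Injective L1 := by
  intro x y hxy
  by_contra hne
  have hsub : L1 (x - y) = 0 := by
    have := h1 (x - y) y
    rw [sub_add_cancel] at this
    rw [hxy] at this
    linear_combination -this
  exact alltop_key h1 h2 h3 hA hsub (sub_ne_zero_of_ne hne)

theorem additive_triple_product_alltop_imp_bijective (p r : ℕ) [Fact p.Prime] (hp : 3 < p)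
    (hr : 0 < r) (L1 L2 L3 : GaloisField p r → GaloisField p r)
    (hL1 : IsAdditive L1) (hL2 : IsAdditive L2) (hL3 : IsAdditive L3)
    (hA : IsAlltop (fun x => L1 x * L2 x * L3 x)) :
    Function.Bijective L1 ∧ Function.Bijective L2 ∧ Function.Bijective L3 := by
  have hA2 : IsAlltop (fun x => L2 x * L1 x * L3 x) := by
    have : (fun x => L2 x * L1 x * L3 x) = fun x => L1 x * L2 x * L3 x := by
      funext x; ring
    rw [this]; exact hA
  have hA3 : IsAlltop (fun x => L3 x * L1 x * L2 x) := by
    have : (fun x => L3 x * L1 x * L2 x) = fun x => L1 x * L2 x * L3 x := by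
      funext x; ring
    rw [this]; exact hA
  exact ⟨Finite.injective_iff_bijective.mp (alltop_inj hL1 hL2 hL3 hA),
    Finite.injective_iff_bijective.mp (alltop_inj hL2 hL1 hL3 hA2),
    Finite.injective_iff_bijective.mp (alltop_inj hL3 hL1 hL2 hA3)⟩
end

section
/- Let p ≥ 5 be a prime with p ≡ 2 (mod 3). Then the function A(x) = x^{p+2} is not an Alltop function on the field F_{p^2}. -/
open Finset

theorem pow_p_add_two_not_alltop (p : ℕ) [Fact p.Prime] (hp : 5 ≤ p) (hp3 : p % 3 = 2) :
    ¬ IsAlltop (fun x : GaloisField p 2 => x ^ (p + 2)) := by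
  set F := GaloisField p 2
  obtain ⟨k, hk⟩ : ∃ k, p + 1 = 3 * k := ⟨(p+1)/3, by omega⟩
  have hcardU : Nat.card Fˣ = p ^ 2 - 1 := by
    rw [Nat.card_units, GaloisField.card p 2 two_ne_zero]
  obtain ⟨ζ, hζ⟩ := IsCyclic.exists_generator (α := Fˣ)
  have hord : orderOf ζ = p ^ 2 - 1 := by
    rw [← hcardU]; exact orderOf_eq_card_of_forall_mem_zpowers hζ
  have hsq : (p + 1) * (p - 1) = p ^ 2 - 1 := by
    have := Nat.sq_sub_sq p 1
    simpa [one_pow] using this.symm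
  -- the element λ
  set lu : Fˣ := ζ ^ (k * (p - 1)) with hlu
  have hmu3 : lu ^ 3 = 1 := by
    rw [hlu, ← pow_mul, mul_comm (k * (p-1)) 3, ← mul_assoc, ← hk, hsq, ← hord,
      pow_orderOf_eq_one]
  have hmu1 : lu ≠ 1 := by
    intro h
    have hdvd := orderOf_dvd_of_pow_eq_one (n := k * (p - 1)) (by rw [← hlu, h])
    rw [hord] at hdvd
    have hpos : 0 < k * (p - 1) := by
      have : 2 ≤ k := by omega
      have : 4 ≤ p - 1 := by omega
      positivity
    have hle := Nat.le_of_dvd hpos hdvd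
    have h3 : 3 * (k * (p - 1)) = p ^ 2 - 1 := by
      rw [← mul_assoc, ← hk, hsq]
    omega
  -- μ in F
  set μ : F := ((lu : Fˣ) : F) with hμ
  have hμ3 : μ ^ 3 = 1 := by rw [hμ, ← Units.val_pow_eq_pow_val, hmu3, Units.val_one]
  have hμ1 : μ ≠ 1 := fun h => hmu1 (Units.ext h)
  have hμquad : μ ^ 2 + μ + 1 = 0 := by
    have : (μ - 1) * (μ ^ 2 + μ + 1) = 0 := by linear_combination hμ3
    rcases mul_eq_zero.mp this with h | h
    · exact absurd (by linear_combination h) hμ1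
    · exact h
  -- λ := ζ^k, so λ^(p-1) = μ
  set l : F := ((ζ ^ k : Fˣ) : F) with hl
  have hl0 : l ≠ 0 := Units.ne_zero _
  have hlp1 : l ^ (p - 1) = μ := by
    rw [hl, hμ, hlu]
    rw [← Units.val_pow_eq_pow_val, ← pow_mul]
  have hlp : l ^ p = μ * l := by
    have : l ^ (p - 1) * l = l ^ p := by
      rw [← pow_succ]; congr 1; omega
    rw [← this, hlp1]
  have hkey : (l ^ p) ^ 2 + l ^ p * l + l ^ 2 = 0 := by
    rw [hlp]; linear_combination (l^2) * hμquad
  -- main computation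
  intro hA
  have hbij := hA 1 one_ne_zero l hl0
  have hD : deltaFn (deltaFn (fun x : F => x ^ (p + 2)) 1) l (l ^ 2)
      = deltaFn (deltaFn (fun x : F => x ^ (p + 2)) 1) l 0 := by
    simp only [deltaFn]
    have hexp : ∀ t : F, t ^ (p + 2) = t ^ p * t ^ 2 := fun t => pow_add t p 2
    have hfr : ∀ x y : F, (x + y) ^ p = x ^ p + y ^ p := fun x y => add_pow_char x y p
    have h2p : (l ^ 2) ^ p = (l ^ p) ^ 2 := pow_right_comm l 2 p
    have h1p : (1 : F) ^ p = 1 := one_pow p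
    rw [hexp (l^2 + l + 1), hexp (l^2 + l), hexp (l^2 + 1), hexp (l^2),
      hexp (0 + l + 1), hexp (0 + l), hexp (0 + 1), hexp 0]
    have h0p : (0 : F) ^ p = 0 := zero_pow (Nat.Prime.ne_zero Fact.out)
    simp only [hfr, h2p, h1p, h0p]
    linear_combination (2 * l) * hkey
  have := hbij.injective hD
  exact hl0 (by simpa [pow_eq_zero_iff] using this)
end

section
/- Let p ≥ 5 be a prime and r a positive integer such that 3 does not divide p^r + 1. Then A(x) = x^{p^r + 2} is an Alltop function on the field F_{p^{2r}}. -/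
open Finset

theorem pow_pr_add_two_alltop (p r : ℕ) [Fact p.Prime] (hp : 5 ≤ p) (hr : 0 < r)
    (h3 : ¬ (3 ∣ p ^ r + 1)) :
    IsAlltop (fun x : GaloisField p (2 * r) => x ^ (p ^ r + 2)) := by
  intro a ha b hb
  haveI : Fintype (GaloisField p (2 * r)) := Fintype.ofFinite _
  have hcard : Fintype.card (GaloisField p (2 * r)) = p ^ (2 * r) := by
    rw [← Nat.card_eq_fintype_card]
    exact GaloisField.card p (2 * r) (by omega)
  have hple : ∀ k : ℕ, (k : GaloisField p (2 * r)) = 0 → p ∣ k := fun k hk =>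
    (CharP.cast_eq_zero_iff (GaloisField p (2 * r)) p k).mp hk
  have hp2 : (2 : GaloisField p (2 * r)) ≠ 0 := by
    intro h
    have := Nat.le_of_dvd (by norm_num) (hple 2 h)
    omega
  have hA : ∀ x y : GaloisField p (2 * r), (x + y) ^ (p ^ r) = x ^ (p ^ r) + y ^ (p ^ r) :=
    fun x y => add_pow_char_pow x y p r
  have hS : ∀ x y : GaloisField p (2 * r), (x - y) ^ (p ^ r) = x ^ (p ^ r) - y ^ (p ^ r) :=
    fun x y => sub_pow_char_pow x y r
  have hqq : ∀ z : GaloisField p (2 * r), (z ^ (p ^ r)) ^ (p ^ r) = z := by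
    intro z
    rw [← pow_mul, ← pow_add, show r + r = 2 * r by ring, ← hcard]
    exact FiniteField.pow_card z
  -- the explicit second-difference formula
  have hD : ∀ x : GaloisField p (2 * r),
      deltaFn (deltaFn (fun x : GaloisField p (2 * r) => x ^ (p ^ r + 2)) a) b x
      = 2 * a * b * x ^ (p ^ r) + (2 * a ^ (p ^ r) * b + 2 * a * b ^ (p ^ r)) * x
        + (a ^ (p ^ r) * b ^ 2 + 2 * a * b ^ (p ^ r) * b + a ^ 2 * b ^ (p ^ r)
            + 2 * a ^ (p ^ r) * a * b) := by
    intro x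
    have h1 : ∀ z : GaloisField p (2 * r), z ^ (p ^ r + 2) = z ^ (p ^ r) * z ^ 2 :=
      fun z => pow_add z _ 2
    simp only [deltaFn, h1, hA]
    ring
  -- the key linear injectivity
  have key : ∀ z : GaloisField p (2 * r),
      2 * a * b * z ^ (p ^ r) + (2 * a ^ (p ^ r) * b + 2 * a * b ^ (p ^ r)) * z = 0
      → z = 0 := by
    intro z hz
    by_contra hz0
    have e1 : a * b * z ^ (p ^ r) + (a ^ (p ^ r) * b + a * b ^ (p ^ r)) * z = 0 := by
      have h2 : (2 : GaloisField p (2 * r))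
          * (a * b * z ^ (p ^ r) + (a ^ (p ^ r) * b + a * b ^ (p ^ r)) * z) = 0 := by
        linear_combination hz
      exact (mul_eq_zero.mp h2).resolve_left hp2
    have e2 : a ^ (p ^ r) * b ^ (p ^ r) * z
        + (a ^ (p ^ r) * b + a * b ^ (p ^ r)) * z ^ (p ^ r) = 0 := by
      have h0 : (a * b * z ^ (p ^ r) + (a ^ (p ^ r) * b + a * b ^ (p ^ r)) * z) ^ (p ^ r) = 0 := by
        rw [e1]
        exact zero_pow (by positivity)
      simp only [hA, mul_pow, hqq] at h0
      linear_combination h0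
    set u : GaloisField p (2 * r) := a ^ (p ^ r) * b with hudef
    set v : GaloisField p (2 * r) := a * b ^ (p ^ r) with hvdef
    have hu : u ≠ 0 := mul_ne_zero (pow_ne_zero _ ha) hb
    have hv : v ≠ 0 := mul_ne_zero ha (pow_ne_zero _ hb)
    have e3 : u * v = (u + v) ^ 2 := by
      have h4 : (u * v - (u + v) ^ 2) * z = 0 := by
        rw [hudef, hvdef]
        linear_combination a * b * e2 - (a ^ (p ^ r) * b + a * b ^ (p ^ r)) * e1
      have h5 := (mul_eq_zero.mp h4).resolve_right hz0
      linear_combination h5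
    have huv : u ^ 2 + u * v + v ^ 2 = 0 := by linear_combination -e3
    have hu3 : u ^ 3 = v ^ 3 := by linear_combination (u - v) * huv
    have huq : u ^ (p ^ r) * u = v ^ (p ^ r) * v := by
      rw [hudef, hvdef]
      simp only [mul_pow, hqq]
      ring
    set t : GaloisField p (2 * r) := u * v⁻¹ with htdef
    have ht3 : t ^ 3 = 1 := by
      rw [htdef, mul_pow, inv_pow, hu3, mul_inv_cancel₀ (pow_ne_zero 3 hv)]
    have htq1 : t ^ (p ^ r + 1) = 1 := by
      rw [htdef, mul_pow, inv_pow, pow_succ, pow_succ, huq,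
        mul_inv_cancel₀ (mul_ne_zero (pow_ne_zero _ hv) hv)]
    have hcop : Nat.Coprime 3 (p ^ r + 1) :=
      (Nat.Prime.coprime_iff_not_dvd (by norm_num)).mpr h3
    have hord : orderOf t ∣ 1 := by
      have := Nat.dvd_gcd (orderOf_dvd_of_pow_eq_one ht3) (orderOf_dvd_of_pow_eq_one htq1)
      rwa [hcop] at this
    have ht1 : t = 1 := orderOf_eq_one_iff.mp (Nat.dvd_one.mp hord)
    have huveq : u = v := by
      have h6 := ht1
      rwa [htdef, mul_inv_eq_one₀ hv] at h6
    have h7 : (3 : GaloisField p (2 * r)) * v ^ 2 = 0 := by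
      rw [huveq] at huv
      linear_combination huv
    have h8 : (3 : GaloisField p (2 * r)) = 0 :=
      (mul_eq_zero.mp h7).resolve_right (pow_ne_zero 2 hv)
    have := Nat.le_of_dvd (by norm_num) (hple 3 h8)
    omega
  -- finish
  refine Finite.injective_iff_bijective.mp ?_
  intro x1 x2 hx
  rw [hD, hD] at hx
  have hzz : 2 * a * b * (x1 - x2) ^ (p ^ r)
      + (2 * a ^ (p ^ r) * b + 2 * a * b ^ (p ^ r)) * (x1 - x2) = 0 := by
    rw [hS]
    linear_combination hx
  exact sub_eq_zero.mp (key _ hzz)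
end

section
/- Let p ≥ 5 be a prime and r a positive integer such that 3 does not divide p^r + 1. Then for every a ∈ F_{p^{2r}} with a ≠ 0, the function Π_a(x) = 2a·x^{p^r + 1} + a^{p^r}·x^2 is a planar function on F_{p^{2r}}. -/
open Finset

lemma aux_core {F : Type*} [Field F] (e : ℕ) (a b z : F)
    (hfrob : ∀ x y : F, (x + y) ^ (e + 1) = x ^ (e + 1) + y ^ (e + 1))
    (hqq : ∀ x : F, x ^ ((e + 1) * (e + 1)) = x)
    (h2 : (2 : F) ≠ 0) (h3F : (3 : F) ≠ 0)
    (h3 : ¬ (3 ∣ e + 2))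
    (ha : a ≠ 0) (hb : b ≠ 0)
    (hz : a * b * z ^ (e + 1) + (a * b ^ (e + 1) + a ^ (e + 1) * b) * z = 0) :
    z = 0 := by
  by_contra hzne
  have hzq : (z ^ (e + 1)) ^ (e + 1) = z := by rw [← pow_mul]; exact hqq z
  have hbq : (b ^ (e + 1)) ^ (e + 1) = b := by rw [← pow_mul]; exact hqq b
  have haq : (a ^ (e + 1)) ^ (e + 1) = a := by rw [← pow_mul]; exact hqq a
  have h0 : (a * b * z ^ (e + 1) + (a * b ^ (e + 1) + a ^ (e + 1) * b) * z) ^ (e + 1) = 0 := by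
    rw [hz]; exact zero_pow (Nat.succ_ne_zero e)
  rw [hfrob] at h0
  simp only [mul_pow] at h0
  rw [hfrob] at h0
  simp only [mul_pow] at h0
  rw [hzq, hbq, haq] at h0
  have hmain : ((a * b ^ (e + 1) + a ^ (e + 1) * b) ^ 2 - a ^ (e + 2) * b ^ (e + 2)) * z = 0 := by
    linear_combination (a * b ^ (e + 1) + a ^ (e + 1) * b) * hz - a * b * h0
  have key2 : (a * b ^ (e + 1) + a ^ (e + 1) * b) ^ 2 = a ^ (e + 2) * b ^ (e + 2) := by
    have h := (mul_eq_zero.mp hmain).resolve_right hzne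
    linear_combination h
  have heq' : a ^ 2 * b ^ 2 * (b ^ (2 * e) + a ^ e * b ^ e + a ^ (2 * e)) = 0 := by
    linear_combination key2
  have hab2 : a ^ 2 * b ^ 2 ≠ 0 := mul_ne_zero (pow_ne_zero _ ha) (pow_ne_zero _ hb)
  have heq : b ^ (2 * e) + a ^ e * b ^ e + a ^ (2 * e) = 0 :=
    (mul_eq_zero.mp heq').resolve_left hab2
  have hane : (a : F) ^ e ≠ 0 := pow_ne_zero _ ha
  have hbne : (b : F) ^ e ≠ 0 := pow_ne_zero _ hb
  have hω : (b ^ e / a ^ e) ^ 2 + (b ^ e / a ^ e) + 1 = 0 := by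
    field_simp
    linear_combination heq
  have hω3 : (b ^ e / a ^ e) ^ 3 = 1 := by
    linear_combination (b ^ e / a ^ e - 1) * hω
  have hu1 : a ^ (e * (e + 2)) = 1 := by
    have h1 : a ^ (e * (e + 2)) * a = a := by
      rw [← pow_succ, show e * (e + 2) + 1 = (e + 1) * (e + 1) by ring]; exact hqq a
    exact mul_right_cancel₀ ha (h1.trans (one_mul a).symm)
  have hv1 : b ^ (e * (e + 2)) = 1 := by
    have h1 : b ^ (e * (e + 2)) * b = b := by
      rw [← pow_succ, show e * (e + 2) + 1 = (e + 1) * (e + 1) by ring]; exact hqq b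
    exact mul_right_cancel₀ hb (h1.trans (one_mul b).symm)
  have hωq : (b ^ e / a ^ e) ^ (e + 2) = 1 := by
    rw [div_pow, ← pow_mul, ← pow_mul, hv1, hu1, div_one]
  have hωd : (b ^ e / a ^ e) ^ ((e + 2) % 3) = 1 := by
    have h' : ((b ^ e / a ^ e) ^ 3) ^ ((e + 2) / 3) * (b ^ e / a ^ e) ^ ((e + 2) % 3) = 1 := by
      rw [← pow_mul, ← pow_add, Nat.div_add_mod]; exact hωq
    rwa [hω3, one_pow, one_mul] at h'
  have hm : (e + 2) % 3 = 1 ∨ (e + 2) % 3 = 2 := by omega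
  rcases hm with hm | hm
  · rw [hm, pow_one] at hωd
    exact h3F (by rw [hωd] at hω; linear_combination hω)
  · rw [hm] at hωd
    have hm2 : (b ^ e / a ^ e) = -2 := by linear_combination hω - hωd
    exact h3F (by linear_combination hωd + (2 - b ^ e / a ^ e) * hm2)

theorem pi_a_planar (p r : ℕ) [Fact p.Prime] (hp : 5 ≤ p) (hr : 0 < r)
    (h3 : ¬ (3 ∣ p ^ r + 1)) :
    ∀ a : GaloisField p (2 * r), a ≠ 0 →
      IsPlanar (fun x : GaloisField p (2 * r) =>
        2 * a * x ^ (p ^ r + 1) + a ^ (p ^ r) * x ^ 2) := by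
  intro a ha b hb
  haveI : Fintype (GaloisField p (2 * r)) := Fintype.ofFinite _
  have hcard : Fintype.card (GaloisField p (2 * r)) = p ^ r * p ^ r := by
    rw [← Nat.card_eq_fintype_card, GaloisField.card p (2 * r) (by omega), ← pow_add, two_mul]
  have hfrob : ∀ x y : GaloisField p (2 * r),
      (x + y) ^ (p ^ r) = x ^ (p ^ r) + y ^ (p ^ r) := fun x y =>
    add_pow_char_pow x y p r
  have hqq : ∀ x : GaloisField p (2 * r), x ^ (p ^ r * p ^ r) = x := fun x => by
    rw [← hcard]; exact FiniteField.pow_card x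
  have h2 : (2 : GaloisField p (2 * r)) ≠ 0 := by
    intro h
    have := Nat.le_of_dvd (by norm_num)
      ((CharP.cast_eq_zero_iff (GaloisField p (2 * r)) p 2).mp (by exact_mod_cast h))
    omega
  have h3F : (3 : GaloisField p (2 * r)) ≠ 0 := by
    intro h
    have := Nat.le_of_dvd (by norm_num)
      ((CharP.cast_eq_zero_iff (GaloisField p (2 * r)) p 3).mp (by exact_mod_cast h))
    omega
  have hq1 : 1 ≤ p ^ r := Nat.one_le_pow _ _ (by omega)
  rw [← Finite.injective_iff_bijective]
  intro x y hxy
  have keyid : ∀ t : GaloisField p (2 * r), deltaFn (fun x : GaloisField p (2 * r) =>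
      2 * a * x ^ (p ^ r + 1) + a ^ (p ^ r) * x ^ 2) b t =
      2 * a * b * t ^ (p ^ r) + (2 * (a * b ^ (p ^ r)) + 2 * (a ^ (p ^ r) * b)) * t
        + (2 * (a * (b ^ (p ^ r) * b)) + a ^ (p ^ r) * b ^ 2) := by
    intro t
    simp only [deltaFn]
    rw [pow_succ, pow_succ, hfrob]
    ring
  rw [keyid, keyid] at hxy
  have hsub : (x - y) ^ (p ^ r) = x ^ (p ^ r) - y ^ (p ^ r) := sub_pow_char_pow x y r
  have h2z : (2 : GaloisField p (2 * r)) * (a * b * (x - y) ^ (p ^ r)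
      + (a * b ^ (p ^ r) + a ^ (p ^ r) * b) * (x - y)) = 0 := by
    linear_combination hxy + 2 * a * b * hsub
  have hz : a * b * (x - y) ^ (p ^ r) + (a * b ^ (p ^ r) + a ^ (p ^ r) * b) * (x - y) = 0 :=
    (mul_eq_zero.mp h2z).resolve_left h2
  obtain ⟨e, he⟩ : ∃ e, p ^ r = e + 1 := ⟨p ^ r - 1, by omega⟩
  rw [he] at hz hfrob hqq h3
  have h3' : ¬ (3 ∣ e + 2) := by omega
  have := aux_core e a b (x - y) hfrob hqq h2 h3F h3' ha hb hz
  exact sub_eq_zero.mp this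
end

section
/- Let p ≥ 5 be a prime, r a positive integer, and F = F_{p^{2r}}. There exists γ ∈ F with γ^2 = −3 (where 3 denotes 1+1+1 in F), and for any such γ and any a ∈ F with a ≠ 0, the identity a^{p^r}·(2a x^{p^r+1} + a^{p^r} x^2) + ((−1+γ)/2)·a·(2a x^{p^r+1} + a^{p^r} x^2)^{p^r} = (a^{p^r} x + ((1+γ)/2)·a·x^{p^r})^2 holds for all x ∈ F. -/
open Finset

theorem pi_a_square_identity (p r : ℕ) [Fact p.Prime] (hp : 5 ≤ p) (hr : 0 < r) :
    (∃ γ : GaloisField p (2 * r), γ ^ 2 = -3) ∧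
    ∀ γ : GaloisField p (2 * r), γ ^ 2 = -3 →
      ∀ a : GaloisField p (2 * r), a ≠ 0 → ∀ x : GaloisField p (2 * r),
        a ^ (p ^ r) * (2 * a * x ^ (p ^ r + 1) + a ^ (p ^ r) * x ^ 2) +
          ((-1 + γ) / 2) * a * (2 * a * x ^ (p ^ r + 1) + a ^ (p ^ r) * x ^ 2) ^ (p ^ r) =
        (a ^ (p ^ r) * x + ((1 + γ) / 2) * a * x ^ (p ^ r)) ^ 2 := by
  set F := GaloisField p (2 * r)
  letI : Fintype F := Fintype.ofFinite F
  have hppos : 0 < p := by omega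
  have hcard : Fintype.card F = p ^ (2 * r) := by
    rw [← Nat.card_eq_fintype_card, GaloisField.card p (2 * r) (by omega)]
  have H : ∀ z : F, (z ^ p ^ r) ^ p ^ r = z := by
    intro z
    rw [← pow_mul, ← pow_add, ← two_mul, ← hcard, FiniteField.pow_card]
  have h3 : (-3 : F) ≠ 0 := by
    have h30 : (3 : F) ≠ 0 := by
      have : ((3 : ℕ) : F) ≠ 0 := by
        rw [Ne, CharP.cast_eq_zero_iff F p]
        intro hd
        have := Nat.le_of_dvd (by norm_num) hd
        omega
      simpa using this
    simpa using h30
  have hfix3 : (-3 : F) ^ p ^ r = -3 := by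
    rw [← iterateFrobenius_def, map_neg, map_ofNat]
  constructor
  · -- existence of γ
    have hq : Odd (p ^ r) := (Nat.Prime.odd_of_ne_two (Fact.out) (by omega)).pow
    obtain ⟨k, hk⟩ := hq
    have hsq : IsSquare (-3 : F) := by
      rw [FiniteField.isSquare_iff (by rw [ringChar.eq F p]; omega) h3]
      have hdiv : Fintype.card F / 2 = (p ^ r - 1) * (k + 1) := by
        rw [hcard, two_mul, pow_add]
        have h1 : 1 ≤ p ^ r := Nat.one_le_pow _ _ hppos
        have h2 : p ^ r * p ^ r = 4 * (k * k) + 4 * k + 1 := by rw [hk]; ring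
        have h4 : (p ^ r - 1) * (k + 1) = 2 * (k * k) + 2 * k := by
          rw [show p ^ r - 1 = 2 * k by omega]; ring
        generalize k * k = m at h2 h4
        omega
      rw [hdiv, pow_mul]
      have hm1 : (-3 : F) ^ (p ^ r - 1) = 1 := by
        have h1 : 1 ≤ p ^ r := Nat.one_le_pow _ _ hppos
        have key : (-3 : F) ^ (p ^ r - 1) * (-3) = 1 * (-3) := by
          rw [← pow_succ, Nat.sub_add_cancel h1, hfix3, one_mul]
        exact mul_right_cancel₀ h3 key
      rw [hm1, one_pow]
    obtain ⟨γ, hγ⟩ := hsq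
    exact ⟨γ, by rw [sq]; exact hγ.symm⟩
  · intro γ hγ a ha x
    have hexp : (2 * a * x ^ (p ^ r + 1) + a ^ p ^ r * x ^ 2) ^ p ^ r
        = 2 * a ^ p ^ r * (x * x ^ p ^ r) + a * (x ^ p ^ r) ^ 2 := by
      rw [← iterateFrobenius_def, map_add, map_mul, map_mul, map_mul, map_pow, map_pow,
        map_ofNat, iterateFrobenius_def, iterateFrobenius_def, iterateFrobenius_def]
      rw [H a]
      have hx1 : (x ^ p ^ r) ^ (p ^ r + 1) = x * x ^ p ^ r := by
        rw [pow_succ, H x]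
      rw [hx1]; ring
    rw [hexp]
    have hx2 : x ^ (p ^ r + 1) = x ^ p ^ r * x := by rw [pow_succ]
    rw [hx2]
    generalize x ^ p ^ r = y
    generalize a ^ p ^ r = A
    have h2 : (2 : F) ≠ 0 := by
      have : ((2 : ℕ) : F) ≠ 0 := by
        rw [Ne, CharP.cast_eq_zero_iff F p]
        intro hd
        have := Nat.le_of_dvd (by norm_num) hd
        omega
      simpa using this
    field_simp
    linear_combination (-(a ^ 2 * y ^ 2)) * hγ
end

section
/- Let p ≥ 5 be a prime, r a positive integer such that 3 does not divide p^r + 1, and F = F_{p^{2r}}. Then for every a ∈ F with a ≠ 0, the planar function Π_a(x) = 2a·x^{p^r+1} + a^{p^r}·x^2 is EA-equivalent to the function x ↦ x^2 on F. -/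
open Finset

/-- Abstract version: in a finite field with a "Frobenius-like" power map `x ↦ x^q`
of order two, together with a primitive sixth root of unity `ω` fixed by it,
the function `2a x^{q+1} + a^q x^2` is EA-equivalent to `x^2`. -/
lemma pi_a_EAequiv_sq_aux {F : Type*} [Field F] [Finite F] {q : ℕ} (hq2 : 2 ≤ q)
    (frob_add : ∀ x y : F, (x + y) ^ q = x ^ q + y ^ q)
    (hxq : ∀ x : F, (x ^ q) ^ q = x)
    (ω : F) (hωe : ω ^ 2 = ω - 1) (hωq : ω ^ q = ω) (h3F : (3 : F) ≠ 0)
    (a : F) (ha : a ≠ 0) :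
    EAEquiv (fun x : F => 2 * a * x ^ (q + 1) + a ^ q * x ^ 2) (fun x : F => x ^ 2) := by
  have frob_sub : ∀ x y : F, (x - y) ^ q = x ^ q - y ^ q := by
    intro x y
    have h := frob_add (x - y) y
    rw [sub_add_cancel] at h
    linear_combination -h
  have hω21 : ω ^ 2 - 1 ≠ 0 := by
    intro h
    apply h3F
    have hω2' : ω = 2 := by linear_combination h - hωe
    rw [hω2'] at hωe
    linear_combination hωe
  have hs : (2 * ω - 1 : F) ≠ 0 := by
    intro h
    apply h3F
    linear_combination (-(2 * ω - 1) - 1) * h + 4 * hωe + h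
  have hAne : a ^ q ≠ 0 := pow_ne_zero q ha
  have hAq : (a ^ q) ^ q = a := hxq a
  have hsA : (2 * ω - 1) * a ^ q ≠ 0 := mul_ne_zero hs hAne
  refine ⟨fun y => ((2 * ω - 1) * a ^ q)⁻¹ * (y + ω * y ^ q),
    fun x => a ^ q * ω * x + a * x ^ q, fun _ => 0, ?_, ?_, ?_, ?_, ?_, ?_⟩
  · refine ⟨fun y => ((2 * ω - 1) * a ^ q)⁻¹ * (y + ω * y ^ q), 0, ?_, fun x => by rw [add_zero]⟩
    intro x y
    simp only
    rw [frob_add]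
    ring
  · refine ⟨fun x => a ^ q * ω * x + a * x ^ q, 0, ?_, fun x => by rw [add_zero]⟩
    intro x y
    simp only
    rw [frob_add]
    ring
  · exact ⟨fun _ => 0, 0, fun _ _ => by ring, fun _ => by ring⟩
  · -- l1 bijective
    rw [← Finite.injective_iff_bijective]
    intro y1 y2 h
    simp only at h
    have hinv : (((2 * ω - 1) * a ^ q)⁻¹ : F) ≠ 0 := inv_ne_zero hsA
    have h' : y1 + ω * y1 ^ q = y2 + ω * y2 ^ q := mul_left_cancel₀ hinv h
    have hd : (y1 - y2) + ω * (y1 - y2) ^ q = 0 := by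
      rw [frob_sub]
      linear_combination h'
    have hdq : (y1 - y2) ^ q + ω * (y1 - y2) = 0 := by
      have h1 : ((y1 - y2) + ω * (y1 - y2) ^ q) ^ q = 0 := by
        rw [hd]
        exact zero_pow (by omega)
      rw [frob_add, mul_pow, hωq, hxq] at h1
      exact h1
    have hz : (ω ^ 2 - 1) * (y1 - y2) = 0 := by linear_combination ω * hdq - hd
    rcases mul_eq_zero.mp hz with h0 | h0
    · exact absurd h0 hω21
    · exact sub_eq_zero.mp h0
  · -- l2 bijective
    rw [← Finite.injective_iff_bijective]
    intro x1 x2 h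
    simp only at h
    have hd : a ^ q * ω * (x1 - x2) + a * (x1 - x2) ^ q = 0 := by
      rw [frob_sub]
      linear_combination h
    have hdq : a * ω * (x1 - x2) ^ q + a ^ q * (x1 - x2) = 0 := by
      have h1 : (a ^ q * ω * (x1 - x2) + a * (x1 - x2) ^ q) ^ q = 0 := by
        rw [hd]
        exact zero_pow (by omega)
      simp only [frob_add, mul_pow, hωq, hxq] at h1
      linear_combination h1
    have hz : (a ^ q * (1 - ω ^ 2)) * (x1 - x2) = 0 := by
      linear_combination hdq - ω * hd
    rcases mul_eq_zero.mp hz with h0 | h0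
    · exfalso
      rcases mul_eq_zero.mp h0 with h1 | h1
      · exact hAne h1
      · exact hω21 (by linear_combination -h1)
    · exact sub_eq_zero.mp h0
  · -- the functional identity
    intro x
    simp only
    have hl2q : (a ^ q * ω * x + a * x ^ q) ^ q = a * ω * x ^ q + a ^ q * x := by
      simp only [frob_add, mul_pow, hωq, hxq]
    have hsq : ((a ^ q * ω * x + a * x ^ q) ^ 2) ^ q = (a * ω * x ^ q + a ^ q * x) ^ 2 := by
      rw [← pow_mul, mul_comm 2 q, pow_mul, hl2q]
    rw [hsq]
    have key : (a ^ q * ω * x + a * x ^ q) ^ 2 + ω * (a * ω * x ^ q + a ^ q * x) ^ 2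
        = ((2 * ω - 1) * a ^ q) * (2 * a * (x ^ q * x) + a ^ q * x ^ 2) := by
      linear_combination ((a ^ q) ^ 2 * x ^ 2 + 2 * a * a ^ q * x * x ^ q
        + a ^ 2 * (x ^ q) ^ 2 * (ω + 1)) * hωe
    rw [key, inv_mul_cancel_left₀ hsA, pow_succ]
    ring

theorem pi_a_EAequiv_sq (p r : ℕ) [Fact p.Prime] (hp : 5 ≤ p) (hr : 0 < r)
    (h3 : ¬ (3 ∣ p ^ r + 1)) :
    ∀ a : GaloisField p (2 * r), a ≠ 0 →
      EAEquiv (fun x : GaloisField p (2 * r) => 2 * a * x ^ (p ^ r + 1) + a ^ (p ^ r) * x ^ 2)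
        (fun x : GaloisField p (2 * r) => x ^ 2) := by
  intro a ha
  have hpp : p.Prime := Fact.out
  haveI : Fintype (GaloisField p (2 * r)) := Fintype.ofFinite _
  haveI : DecidableEq (GaloisField p (2 * r)) := Classical.decEq _
  -- numeric facts about q = p ^ r
  have hq5 : 5 ≤ p ^ r := le_trans hp (Nat.le_self_pow (by omega) p)
  have h3p : ¬ (3 ∣ p ^ r) := by
    intro h
    have h3q : (3 : ℕ).Prime := by norm_num
    have h1 : 3 ∣ p := h3q.dvd_of_dvd_pow h
    have := (Nat.prime_dvd_prime_iff_eq h3q hpp).mp h1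
    omega
  have hq3 : p ^ r % 3 = 1 := by omega
  have hqodd : p ^ r % 2 = 1 := by
    have h2 : ¬ (2 ∣ p ^ r) := by
      intro h
      have h2q : (2 : ℕ).Prime := by norm_num
      have h1 : 2 ∣ p := h2q.dvd_of_dvd_pow h
      have := (Nat.prime_dvd_prime_iff_eq h2q hpp).mp h1
      omega
    omega
  have hq6 : p ^ r % 6 = 1 := by omega
  have hcard : Fintype.card (GaloisField p (2 * r)) = p ^ r * p ^ r := by
    have h := GaloisField.card p (2 * r) (by omega)
    rw [Nat.card_eq_fintype_card] at h
    rw [h, ← pow_add]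
    congr 1
    omega
  have hxq : ∀ x : GaloisField p (2 * r), (x ^ p ^ r) ^ p ^ r = x := by
    intro x
    rw [← pow_mul, ← hcard]
    exact FiniteField.pow_card x
  have frob_add : ∀ x y : GaloisField p (2 * r), (x + y) ^ p ^ r = x ^ p ^ r + y ^ p ^ r :=
    fun x y => add_pow_char_pow x y p r
  have h3F : (3 : GaloisField p (2 * r)) ≠ 0 := by
    intro h
    have h1 := (CharP.cast_eq_zero_iff (GaloisField p (2 * r)) p 3).mp h
    have := Nat.le_of_dvd (by norm_num) h1
    omega
  -- construct a primitive sixth root of unity ω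
  obtain ⟨g, hg⟩ := IsCyclic.exists_generator (α := (GaloisField p (2 * r))ˣ)
  have hog : orderOf g = p ^ r * p ^ r - 1 := by
    rw [orderOf_eq_card_of_forall_mem_zpowers hg, Nat.card_eq_fintype_card,
      Fintype.card_units, hcard]
  have hN1 : (p ^ r * p ^ r) % 6 = 1 := by
    rw [Nat.mul_mod, hq6]
  have h25 : 25 ≤ p ^ r * p ^ r := Nat.mul_le_mul hq5 hq5
  obtain ⟨k, hk⟩ : 6 ∣ p ^ r * p ^ r - 1 := by omega
  have hkpos : 0 < k := by omega
  have hoω' : orderOf (g ^ k) = 6 := by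
    rw [orderOf_pow, hog, hk]
    rw [Nat.gcd_eq_right ⟨6, by ring⟩, Nat.mul_div_cancel _ hkpos]
  set ω : GaloisField p (2 * r) := ((g ^ k : (GaloisField p (2 * r))ˣ) : GaloisField p (2 * r))
    with hωdef
  have hω6 : ω ^ 6 = 1 := by
    have h := pow_orderOf_eq_one (g ^ k)
    rw [hoω'] at h
    rw [hωdef, ← Units.val_pow_eq_pow_val, h, Units.val_one]
  have hω2 : ω ^ 2 ≠ 1 := by
    intro h
    have h1 : (g ^ k) ^ 2 = 1 :=
      Units.ext (by rw [Units.val_pow_eq_pow_val, ← hωdef, h, Units.val_one])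
    have h2 := orderOf_dvd_of_pow_eq_one h1
    rw [hoω'] at h2
    omega
  have hω3 : ω ^ 3 ≠ 1 := by
    intro h
    have h1 : (g ^ k) ^ 3 = 1 :=
      Units.ext (by rw [Units.val_pow_eq_pow_val, ← hωdef, h, Units.val_one])
    have h2 := orderOf_dvd_of_pow_eq_one h1
    rw [hoω'] at h2
    omega
  have hω3' : ω ^ 3 = -1 := by
    have hsplit : (ω ^ 3 - 1) * (ω ^ 3 + 1) = 0 := by linear_combination hω6
    rcases mul_eq_zero.mp hsplit with h | h
    · exact absurd (sub_eq_zero.mp h) hω3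
    · exact eq_neg_of_add_eq_zero_left h
  have hωe : ω ^ 2 = ω - 1 := by
    have hne : ω + 1 ≠ 0 := by
      intro h
      apply hω2
      have h1 : ω = -1 := eq_neg_of_add_eq_zero_left h
      rw [h1]
      ring
    have hsplit : (ω + 1) * (ω ^ 2 - ω + 1) = 0 := by linear_combination hω3'
    rcases mul_eq_zero.mp hsplit with h | h
    · exact absurd h hne
    · linear_combination h
  have hωq : ω ^ p ^ r = ω := by
    obtain ⟨m, hm⟩ : 6 ∣ p ^ r - 1 := by omega
    have hqm : p ^ r = 6 * m + 1 := by omega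
    rw [hqm, pow_succ, pow_mul, hω6, one_pow, one_mul]
  exact pi_a_EAequiv_sq_aux (by omega) frob_add hxq ω hωe hωq h3F a ha
end

section
/- Let q = p^m with p ≥ 5 prime and let A : F_q → F_q be an Alltop function. For a, b ∈ F_q define the vector v_{ab} ∈ ℂ^{F_q} by v_{ab}(x) = (1/√q)·χ(A(x+a) + b(x+a)), where χ(x) = e^{2πi·tr(x)/p} and tr : F_q → F_p is the absolute trace. Then the standard basis E of ℂ^{F_q}, together with the q sets V_a = {v_{ab} : b ∈ F_q} for a ∈ F_q, form a complete set of q + 1 mutually unbiased bases of ℂ^q: each V_a is an orthonormal basis, and any two distinct bases among E, V_0, ..., V_{q-1} are unbiased. -/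
open Finset

/-- The additive character `χ(x) = e^{2πi·tr(x)/p}` of `F_{p^m}`, where `tr` is the
absolute trace to `F_p = ZMod p`. -/
noncomputable def chi (p m : ℕ) [Fact p.Prime] (x : GaloisField p m) : ℂ :=
  Complex.exp (2 * Real.pi * Complex.I *
    ((Algebra.trace (ZMod p) (GaloisField p m) x).val : ℂ) / (p : ℂ))

section aux
variable (p m : ℕ) [Fact p.Prime]

noncomputable def zetaC (p : ℕ) : ℂ := Complex.exp (2 * Real.pi * Complex.I / p)

lemma zetaC_pow (p : ℕ) [Fact p.Prime] : zetaC p ^ p = 1 := by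
  have hp : (p : ℂ) ≠ 0 := by
    exact_mod_cast (Fact.out : p.Prime).ne_zero
  rw [zetaC, ← Complex.exp_nat_mul, mul_div_cancel₀ _ hp]
  simpa using Complex.exp_int_mul_two_pi_mul_I 1

lemma chi_eq (x : GaloisField p m) :
    chi p m x = zetaC p ^ (Algebra.trace (ZMod p) (GaloisField p m) x).val := by
  rw [chi, zetaC, ← Complex.exp_nat_mul]
  ring_nf

lemma zetaC_pow_val (a : ZMod p) (n : ℕ) (h : (n : ZMod p) = a) :
    zetaC p ^ a.val = zetaC p ^ n := by
  have : n % p = a.val := by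
    rw [← ZMod.val_natCast, h]
  conv_rhs => rw [← Nat.div_add_mod n p]
  rw [pow_add, pow_mul, zetaC_pow, one_pow, one_mul, this]

lemma chi_add (x y : GaloisField p m) : chi p m (x + y) = chi p m x * chi p m y := by
  rw [chi_eq, chi_eq, chi_eq, map_add, ← pow_add]
  exact zetaC_pow_val p _ _ (by push_cast [ZMod.natCast_val, ZMod.cast_id]; ring)

lemma chi_zero : chi p m 0 = 1 := by
  rw [chi_eq]
  simp

lemma abs_chi (x : GaloisField p m) : ‖chi p m x‖ = 1 := by
  rw [chi]
  have : 2 * Real.pi * Complex.I * ((Algebra.trace (ZMod p) (GaloisField p m) x).val : ℂ) / p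
      = ((2 * Real.pi * (Algebra.trace (ZMod p) (GaloisField p m) x).val / p : ℝ) : ℂ)
        * Complex.I := by push_cast; ring
  rw [this, Complex.norm_exp_ofReal_mul_I]

lemma chi_ne_zero (x : GaloisField p m) : chi p m x ≠ 0 := Complex.exp_ne_zero _

lemma conj_chi (x : GaloisField p m) :
    (starRingEnd ℂ) (chi p m x) = chi p m (-x) := by
  have h1 : chi p m (-x) * chi p m x = 1 := by
    rw [← chi_add]; simpa using chi_zero p m
  have h2 : (starRingEnd ℂ) (chi p m x) * chi p m x = 1 := by
    rw [← Complex.normSq_eq_conj_mul_self]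
    rw [← Complex.sq_norm, abs_chi]
    norm_num
  exact mul_right_cancel₀ (chi_ne_zero p m x) (h2.trans h1.symm)

end aux

section aux2
variable (p m : ℕ) [Fact p.Prime]

lemma exists_tr_ne : ∃ u : GaloisField p m,
    Algebra.trace (ZMod p) (GaloisField p m) u ≠ 0 := by
  have h := Algebra.trace_ne_zero (ZMod p) (GaloisField p m)
  rw [DFunLike.ne_iff] at h
  simpa using h

lemma chi_ne_one {u : GaloisField p m}
    (hu : Algebra.trace (ZMod p) (GaloisField p m) u ≠ 0) : chi p m u ≠ 1 := by
  intro h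
  have hp : p.Prime := Fact.out
  have hp0 : (p : ℂ) ≠ 0 := by exact_mod_cast hp.ne_zero
  rw [chi, Complex.exp_eq_one_iff] at h
  obtain ⟨n, hn⟩ := h
  set v := (Algebra.trace (ZMod p) (GaloisField p m) u).val with hv
  have h2pi : (2 * (Real.pi : ℂ) * Complex.I) ≠ 0 := by
    simp [Real.pi_ne_zero, Complex.I_ne_zero]
  have h3 : ((v : ℂ) / (p : ℂ)) = (n : ℂ) := by
    apply mul_left_cancel₀ h2pi
    calc 2 * (Real.pi : ℂ) * Complex.I * ((v : ℂ) / (p : ℂ))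
        = 2 * Real.pi * Complex.I * (v : ℂ) / (p : ℂ) := by ring
      _ = (n : ℂ) * (2 * Real.pi * Complex.I) := hn
      _ = 2 * (Real.pi : ℂ) * Complex.I * (n : ℂ) := by ring
  rw [div_eq_iff hp0] at h3
  have h4 : (v : ℤ) = n * p := by exact_mod_cast h3
  have hvpos : 0 < v := by
    rcases Nat.eq_zero_or_pos v with h | h
    · exact absurd ((ZMod.val_eq_zero _).mp h) hu
    · exact h
  have hvlt : v < p := ZMod.val_lt _
  have hdvd : (p : ℤ) ∣ (v : ℤ) := Dvd.intro n (by linarith [h4])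
  have hdvd' : p ∣ v := by exact_mod_cast hdvd
  have := Nat.le_of_dvd hvpos hdvd'
  omega

variable [Fintype (GaloisField p m)]

lemma sum_chi : ∑ x : GaloisField p m, chi p m x = 0 := by
  obtain ⟨u, hu⟩ := exists_tr_ne p m
  have h : ∑ x : GaloisField p m, chi p m x
      = (∑ x : GaloisField p m, chi p m x) * chi p m u := by
    conv_lhs => rw [← Equiv.sum_comp (Equiv.addRight u) (chi p m)]
    rw [Finset.sum_mul]
    apply Finset.sum_congr rfl
    intro x _
    simp [chi_add]
  have h2 : (∑ x : GaloisField p m, chi p m x) * (chi p m u - 1) = 0 := by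
    rw [mul_sub, mul_one, ← h, sub_self]
  rcases mul_eq_zero.mp h2 with h3 | h3
  · exact h3
  · exact absurd (sub_eq_zero.mp h3) (chi_ne_one p m hu)

lemma sum_chi_comp_bij {h : GaloisField p m → GaloisField p m}
    (hb : Function.Bijective h) :
    ∑ x : GaloisField p m, chi p m (h x) = ∑ x : GaloisField p m, chi p m x :=
  Fintype.sum_bijective h hb _ _ (fun _ => rfl)

lemma card_gf (hm : 0 < m) : (Fintype.card (GaloisField p m) : ℝ) = (p : ℝ) ^ m := by
  have := GaloisField.card p m hm.ne'
  simp_all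

lemma planar_abs (hm : 0 < m) {g : GaloisField p m → GaloisField p m}
    (hg : IsPlanar g) :
    ‖∑ x : GaloisField p m, chi p m (g x)‖ = Real.sqrt ((p : ℝ) ^ m) := by
  set S := ∑ x : GaloisField p m, chi p m (g x) with hS
  have key : (starRingEnd ℂ) S * S = (((p : ℝ) ^ m : ℝ) : ℂ) := by
    have e1 : (starRingEnd ℂ) S * S
        = ∑ y : GaloisField p m, ∑ x : GaloisField p m, chi p m (g x - g y) := by
      rw [hS, map_sum, Finset.sum_mul]
      apply Finset.sum_congr rfl
      intro y _
      rw [Finset.mul_sum]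
      apply Finset.sum_congr rfl
      intro x _
      rw [conj_chi, ← chi_add]
      ring_nf
    have e2 : ∀ y : GaloisField p m,
        ∑ x : GaloisField p m, chi p m (g x - g y)
          = ∑ t : GaloisField p m, chi p m (deltaFn g t y) := by
      intro y
      rw [← Equiv.sum_comp (Equiv.addLeft y) (fun x => chi p m (g x - g y))]
      apply Finset.sum_congr rfl
      intro t _
      simp [deltaFn, add_comm]
    rw [e1]
    simp_rw [e2]
    rw [Finset.sum_comm]
    rw [Fintype.sum_eq_single (0 : GaloisField p m)
      (fun t ht => by rw [sum_chi_comp_bij p m (hg t ht), sum_chi])]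
    have : ∀ y : GaloisField p m, chi p m (deltaFn g 0 y) = 1 := by
      intro y; simp [deltaFn, chi_zero]
    rw [Finset.sum_congr rfl (fun y _ => this y), Finset.sum_const, Finset.card_univ]
    rw [nsmul_eq_mul, mul_one]
    rw [← card_gf p m hm]
    norm_num
  have hnormSq : Complex.normSq S = (p : ℝ) ^ m := by
    have := Complex.normSq_eq_conj_mul_self (z := S)
    rw [key] at this
    exact Complex.ofReal_inj.mp this
  rw [Complex.norm_def, hnormSq]

end aux2

lemma sum_chi_mul (p m : ℕ) [Fact p.Prime] [Fintype (GaloisField p m)]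
    {c : GaloisField p m} (hc : c ≠ 0) :
    ∑ x : GaloisField p m, chi p m (c * x) = 0 := by
  rw [sum_chi_comp_bij p m (Finite.injective_iff_bijective.mp (mul_right_injective₀ hc)), sum_chi]


/-- The standard Hermitian inner product `⟨u, w⟩ = ∑ x, conj (u x) * w x` on `ℂ^F`. -/
noncomputable def herm {F : Type*} [Fintype F] (u w : F → ℂ) : ℂ :=
  ∑ x : F, (starRingEnd ℂ) (u x) * w x

/-- The Alltop-type vector `v_{ab}(x) = q^{-1/2} χ(A(x+a) + b(x+a))` in `ℂ^{F_q}`,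
`q = p^m`. -/
noncomputable def alltopVec (p m : ℕ) [Fact p.Prime]
    (A : GaloisField p m → GaloisField p m) (a b : GaloisField p m) :
    GaloisField p m → ℂ :=
  fun x => ((1 / Real.sqrt ((p : ℝ) ^ m) : ℝ) : ℂ) * chi p m (A (x + a) + b * (x + a))

open scoped Classical in
/-- The standard basis vector `e_y` of `ℂ^{F_q}`. -/
noncomputable def stdVec (p m : ℕ) [Fact p.Prime] (y : GaloisField p m) : GaloisField p m → ℂ :=
  fun x => if x = y then 1 else 0

open scoped Classical in
theorem alltop_complete_MUBs (p m : ℕ) [Fact p.Prime] [Fintype (GaloisField p m)]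
    (hp : 5 ≤ p) (hm : 0 < m) (A : GaloisField p m → GaloisField p m) (hA : IsAlltop A) :
    -- each V_a is an orthonormal basis (q orthonormal vectors in ℂ^q)
    (∀ a b d : GaloisField p m,
      herm (alltopVec p m A a b) (alltopVec p m A a d) = if b = d then 1 else 0) ∧
    -- the standard basis E is orthonormal
    (∀ y z : GaloisField p m, herm (stdVec p m y) (stdVec p m z) = if y = z then 1 else 0) ∧
    -- distinct bases V_a and V_c are unbiased
    (∀ a c : GaloisField p m, a ≠ c → ∀ b d : GaloisField p m,
      ‖herm (alltopVec p m A a b) (alltopVec p m A c d)‖ =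
        1 / Real.sqrt ((p : ℝ) ^ m)) ∧
    -- each V_a is unbiased with the standard basis E
    (∀ y a b : GaloisField p m,
      ‖herm (stdVec p m y) (alltopVec p m A a b)‖ =
        1 / Real.sqrt ((p : ℝ) ^ m)) := by
  have hq0 : (0 : ℝ) < (p : ℝ) ^ m := by positivity
  set q : ℝ := (p : ℝ) ^ m with hq
  have hsq : Real.sqrt q * Real.sqrt q = q := Real.mul_self_sqrt hq0.le
  have hsqpos : 0 < Real.sqrt q := Real.sqrt_pos.mpr hq0
  set c0 : ℂ := ((1 / Real.sqrt q : ℝ) : ℂ) with hc0def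
  have hc0 : c0 * c0 = ((1 / q : ℝ) : ℂ) := by
    rw [hc0def, ← Complex.ofReal_mul]
    congr 1
    rw [div_mul_div_comm, one_mul, hsq]
  have hcard : (Fintype.card (GaloisField p m) : ℂ) = ((q : ℝ) : ℂ) := by
    rw [show ((Fintype.card (GaloisField p m) : ℕ) : ℂ)
        = (((Fintype.card (GaloisField p m) : ℕ) : ℝ) : ℂ) by norm_num,
      card_gf p m hm]
  refine ⟨?_, ?_, ?_, ?_⟩
  · -- orthonormality of each V_a
    intro a b d
    have step : herm (alltopVec p m A a b) (alltopVec p m A a d)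
        = (c0 * c0) * ∑ x : GaloisField p m, chi p m ((d - b) * (x + a)) := by
      rw [herm, Finset.mul_sum]
      apply Finset.sum_congr rfl
      intro x _
      simp only [alltopVec, map_mul, Complex.conj_ofReal, conj_chi]
      rw [← hc0def]
      rw [show (c0 * chi p m (-(A (x + a) + b * (x + a)))) * (c0 * chi p m (A (x + a) + d * (x + a)))
          = c0 * c0 * (chi p m (-(A (x + a) + b * (x + a))) * chi p m (A (x + a) + d * (x + a))) by ring]
      rw [← chi_add]
      congr 2
      ring
    rw [step, Fintype.sum_bijective (fun x => x + a) (Equiv.addRight a).bijective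
      (fun x => chi p m ((d - b) * (x + a))) (fun y => chi p m ((d - b) * y)) (fun _ => rfl)]
    by_cases hbd : b = d
    · subst hbd
      simp only [sub_self, zero_mul, chi_zero, Finset.sum_const, Finset.card_univ,
        nsmul_eq_mul, mul_one, if_pos rfl]
      rw [hcard, hc0]
      rw [← Complex.ofReal_mul]
      rw [one_div, inv_mul_cancel₀ hq0.ne']
      norm_num
    · rw [if_neg hbd]
      rw [sum_chi_mul p m (sub_ne_zero.mpr (Ne.symm hbd))]
      rw [mul_zero]
  · -- std basis orthonormal
    intro y z
    simp only [herm, stdVec, apply_ite (starRingEnd ℂ), map_one, map_zero, ite_mul, one_mul,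
      zero_mul]
    rw [Finset.sum_ite_eq' Finset.univ y (fun x => if x = z then (1:ℂ) else 0)]
    simp [eq_comm]
  · -- unbiased: distinct alltop bases
    intro a c hac b d
    set e : GaloisField p m := c - a with he_def
    have he : e ≠ 0 := sub_ne_zero.mpr (Ne.symm hac)
    set g : GaloisField p m → GaloisField p m :=
      fun y => deltaFn A e y + (d - b) * y + d * e with hg_def
    have harg : ∀ x : GaloisField p m,
        -(A (x + a) + b * (x + a)) + (A (x + c) + d * (x + c)) = g (x + a) := by
      intro x
      simp only [hg_def, deltaFn, he_def]
      rw [show x + a + (c - a) = x + c by ring]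
      ring
    have step : herm (alltopVec p m A a b) (alltopVec p m A c d)
        = (c0 * c0) * ∑ x : GaloisField p m, chi p m (g (x + a)) := by
      rw [herm, Finset.mul_sum]
      apply Finset.sum_congr rfl
      intro x _
      simp only [alltopVec, map_mul, Complex.conj_ofReal, conj_chi]
      rw [← hc0def]
      rw [show (c0 * chi p m (-(A (x + a) + b * (x + a)))) * (c0 * chi p m (A (x + c) + d * (x + c)))
          = c0 * c0 * (chi p m (-(A (x + a) + b * (x + a))) * chi p m (A (x + c) + d * (x + c))) by ring]
      rw [← chi_add, harg x]
    have hgp : IsPlanar g := by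
      intro t ht
      have hD := hA e he t ht
      have hfun : deltaFn g t
          = (fun z => z + (d - b) * t) ∘ (deltaFn (deltaFn A e) t) := by
        funext y
        simp only [hg_def, deltaFn, Function.comp]
        ring
      rw [hfun]
      exact (Equiv.addRight ((d - b) * t)).bijective.comp hD
    rw [step, Fintype.sum_bijective (fun x => x + a) (Equiv.addRight a).bijective
      (fun x => chi p m (g (x + a))) (fun y => chi p m (g y)) (fun _ => rfl)]
    rw [norm_mul, hc0, planar_abs p m hm hgp, ← hq]
    rw [Complex.norm_real, Real.norm_eq_abs, abs_of_nonneg (by positivity)]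
    field_simp
    rw [Real.sq_sqrt hq0.le]
  · -- unbiased with std basis
    intro y a b
    have step : herm (stdVec p m y) (alltopVec p m A a b) = alltopVec p m A a b y := by
      rw [herm]
      rw [Fintype.sum_eq_single y (fun x hx => by simp [stdVec, hx])]
      simp [stdVec]
    rw [step]
    rw [show alltopVec p m A a b y = c0 * chi p m (A (y + a) + b * (y + a)) from rfl]
    rw [norm_mul, abs_chi, mul_one, hc0def, Complex.norm_real, Real.norm_eq_abs,
      abs_of_nonneg (by positivity)]
end

section
/- Let K ≥ 2 and suppose B_0, ..., B_K are K + 1 mutually unbiased orthonormal bases of ℂ^K (a complete set of MUBs). Regard their union C as a signal set of N = K^2 + K unit vectors. Then the maximum correlation amplitude I_max(C) = max over distinct u, v ∈ C of |⟨u, v⟩| equals 1/√K, which equals the Levenstein bound value √((2N − K^2 − K)/((K+1)(N − K))) for N = K^2 + K; that is, C meets the maximum Levenstein bound. -/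
/-- A complete set of `K + 1` mutually unbiased bases of `ℂ^K`, viewed as an
`(N, K)` signal set with `N = K^2 + K`, meets the maximum Levenstein bound:
its maximum correlation amplitude is `1/√K`, which is exactly the Levenstein
bound value `√((2N − K² − K)/((K+1)(N − K)))` for `N = K² + K`. -/
theorem mubs_meet_levenstein_bound (K : ℕ) (hK : 2 ≤ K)
    (B : Fin (K + 1) → Fin K → EuclideanSpace ℂ (Fin K))
    (horth : ∀ i, Orthonormal ℂ (B i))
    (hunbiased : ∀ i j, i ≠ j → ∀ s t,
      ‖(inner ℂ (B i s) (B j t) : ℂ)‖ = 1 / Real.sqrt K) :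
    IsGreatest {x : ℝ | ∃ u v : EuclideanSpace ℂ (Fin K),
        (∃ i s, u = B i s) ∧ (∃ j t, v = B j t) ∧ u ≠ v ∧ x = ‖(inner ℂ u v : ℂ)‖}
      (1 / Real.sqrt K) ∧
    (1 / Real.sqrt K : ℝ) =
      Real.sqrt ((2 * ((K : ℝ) ^ 2 + K) - (K : ℝ) ^ 2 - K) /
        (((K : ℝ) + 1) * (((K : ℝ) ^ 2 + K) - K))) := by
  have hKpos : (0:ℝ) < K := by positivity
  have hK1 : (1:ℝ) < K := by exact_mod_cast Nat.lt_of_lt_of_le one_lt_two hK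
  have hs1 : 1 < Real.sqrt K := by
    rw [show (1:ℝ) = Real.sqrt 1 from (Real.sqrt_one).symm]
    exact Real.sqrt_lt_sqrt zero_le_one hK1
  have hslt : 1 / Real.sqrt K < 1 := by
    rw [div_lt_one (by linarith)]; exact hs1
  set i0 : Fin (K + 1) := ⟨0, by omega⟩ with hi0
  set i1 : Fin (K + 1) := ⟨1, by omega⟩ with hi1
  set s0 : Fin K := ⟨0, by omega⟩ with hs0
  refine ⟨⟨?_, ?_⟩, ?_⟩
  · -- membership
    refine ⟨B i0 s0, B i1 s0, ⟨i0, s0, rfl⟩, ⟨i1, s0, rfl⟩, ?_, ?_⟩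
    · intro h
      have h2 := hunbiased i0 i1 (by simp [i0, i1, Fin.ext_iff]) s0 s0
      rw [h] at h2
      have hn : ‖B i1 s0‖ = 1 := (horth i1).1 s0
      rw [inner_self_eq_norm_sq_to_K (𝕜 := ℂ), hn] at h2
      norm_num at h2
      linarith
    · exact (hunbiased i0 i1 (by simp [i0, i1, Fin.ext_iff]) s0 s0).symm
  · -- upper bound
    rintro x ⟨u, v, ⟨i, s, rfl⟩, ⟨j, t, rfl⟩, hne, rfl⟩
    by_cases hij : i = j
    · subst hij
      have hst : s ≠ t := fun h => hne (by rw [h])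
      rw [(horth i).2 hst]
      simp
    · exact le_of_eq (hunbiased i j hij s t)
  · -- the bound value
    have h2 : (2 * ((K : ℝ) ^ 2 + K) - (K : ℝ) ^ 2 - K) /
        (((K : ℝ) + 1) * (((K : ℝ) ^ 2 + K) - K)) = ((K:ℝ))⁻¹ := by
      field_simp
      have hK0 : (K:ℝ) ≠ 0 := hKpos.ne'
      rw [div_eq_iff (by simpa using hK0)]
      ring
    rw [h2, Real.sqrt_inv, one_div]
end
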